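/- Fix a prime q, an integer d ≥ 2, t = ⌈2·log_q d + 2⌉, and d distinct monic irreducible polynomials p_1, …, p_d of degree t over F = F_q. For any positive integer N and any canonical box B of volume q^{−s} with s ≤ N, the number of polynomials f ∈ F[x] of degree < N with r(f) ∈ B equals exactly q^{N−s}. -/

import Mathlib

open Finset Polynomial

/-- The value at `1/q` of a polynomial over `ZMod q`, with coefficients lifted to
`{0, 1, …, q−1} ⊆ ℝ`. -/
noncomputable def pev (q : ℕ) (g : Polynomial (ZMod q)) : ℝ :=
  ∑ j ∈ Finset.range (g.natDegree + 1), ((g.coeff j).val : ℝ) / (q : ℝ) ^ j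

/-- `r_p(f)`: writing `f = f₀ + f₁ p + f₂ p² + ⋯` in base `p` (each `fᵢ` of degree `< t`,
obtained as `(f /ₘ p^i) %ₘ p`), the real number
`(f₀(1/q) + f₁(1/q) q^(−t) + f₂(1/q) q^(−2t) + ⋯)/q`. -/
noncomputable def rp (q t : ℕ) (p f : Polynomial (ZMod q)) : ℝ :=
  (∑ i ∈ Finset.range (f.natDegree + 1), pev q ((f /ₘ p ^ i) %ₘ p) / (q : ℝ) ^ (i * t)) / q

/-- The map `r : F[x] → [0,1)^d`, `r(f) = (r_{p 1}(f), …, r_{p d}(f))`. -/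
noncomputable def rmap (q t d : ℕ) (p : Fin d → Polynomial (ZMod q))
    (f : Polynomial (ZMod q)) : Fin d → ℝ :=
  fun i => rp q t (p i) f

/-- The canonical box `∏ i, [a i / q^(t * k i), (a i + 1) / q^(t * k i))`. -/
def canonicalBox (q t d : ℕ) (k a : Fin d → ℕ) : Set (Fin d → ℝ) :=
  Set.univ.pi fun i =>
    Set.Ico ((a i : ℝ) / (q : ℝ) ^ (t * k i)) (((a i : ℝ) + 1) / (q : ℝ) ^ (t * k i))

/-- A basic box in base `q` in `[0,1]^d` of volume `q^(-n)`. -/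
def IsBasicBox (q d n : ℕ) (β : Set (Fin d → ℝ)) : Prop :=
  ∃ k a : Fin d → ℕ, (∀ i, a i + 1 ≤ q ^ k i) ∧ (∑ i, k i) = n ∧
    β = Set.univ.pi fun i =>
      Set.Ico ((a i : ℝ) / (q : ℝ) ^ k i) (((a i : ℝ) + 1) / (q : ℝ) ^ k i)

/-- A canonical box with parameter `t`, as a set. -/
def IsCanonicalBox (q t d : ℕ) (B : Set (Fin d → ℝ)) : Prop :=
  ∃ k a : Fin d → ℕ, (∀ i, a i + 1 ≤ q ^ (t * k i)) ∧ B = canonicalBox q t d k a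

/-- `(B, β)` is a good pair: `β` is a basic box of volume `q^(-n)` and `B` is the
smallest canonical box containing `β`. -/
def IsGoodPair (q t d n : ℕ) (B β : Set (Fin d → ℝ)) : Prop :=
  IsBasicBox q d n β ∧ IsCanonicalBox q t d B ∧ β ⊆ B ∧
    ∀ B' : Set (Fin d → ℝ), IsCanonicalBox q t d B' → β ⊆ B' → B ⊆ B'

/-- The polynomial obtained from `f` by setting the coefficients of
`x^0, x^1, …, x^(c-1)` to zero. -/
noncomputable def eraseLow (q : ℕ) (c : ℕ) (f : Polynomial (ZMod q)) : Polynomial (ZMod q) :=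
  ∑ j ∈ f.support.filter (fun j => c ≤ j), Polynomial.monomial j (f.coeff j)

lemma digit_sum_lt (b n : ℕ) (hb : 0 < b) (c : ℕ → ℕ) (hc : ∀ j < n, c j < b) :
    ∑ j ∈ range n, c j * b ^ j < b ^ n := by
  induction n with
  | zero => simpa using hb
  | succ n ih =>
    rw [Finset.sum_range_succ]
    have h1 : ∑ j ∈ range n, c j * b ^ j < b ^ n := ih (fun j hj => hc j (by omega))
    have h2 : c n ≤ b - 1 := by have := hc n (by omega); omega
    have h3 : c n * b ^ n ≤ (b - 1) * b ^ n := Nat.mul_le_mul_right _ h2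
    obtain ⟨m, rfl⟩ : ∃ m, b = m + 1 := ⟨b - 1, by omega⟩
    have : (m+1) ^ (n+1) = (m+1) ^ n + ((m+1) - 1) * (m+1) ^ n := by
      simp [Nat.add_sub_cancel]; ring
    omega

lemma digit_sum_inj (b : ℕ) (hb : 0 < b) : ∀ (n : ℕ) (c c' : ℕ → ℕ),
    (∀ j < n, c j < b) → (∀ j < n, c' j < b) →
    (∑ j ∈ range n, c j * b ^ j = ∑ j ∈ range n, c' j * b ^ j) → ∀ j < n, c j = c' j := by
  intro n
  induction n with
  | zero => intro c c' _ _ _ j hj; omega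
  | succ n ih =>
    intro c c' hc hc' h j hj
    rw [Finset.sum_range_succ', Finset.sum_range_succ'] at h
    have e : ∀ c : ℕ → ℕ, (∑ j ∈ range n, c (j+1) * b ^ (j+1)) + c 0 * b ^ 0
        = (∑ j ∈ range n, c (j+1) * b ^ j) * b + c 0 := by
      intro c
      rw [Finset.sum_mul, pow_zero, mul_one]
      congr 1
      apply Finset.sum_congr rfl; intro i _; rw [pow_succ]; ring
    rw [e c, e c'] at h
    set S := ∑ j ∈ range n, c (j+1) * b ^ j with hS
    set S' := ∑ j ∈ range n, c' (j+1) * b ^ j with hS'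
    have hc0 : c 0 < b := hc 0 (by omega)
    have hc0' : c' 0 < b := hc' 0 (by omega)
    have hm : c 0 = c' 0 := by
      have h1 : (c 0 + S * b) % b = (c' 0 + S' * b) % b := by rw [add_comm (c 0), add_comm (c' 0), h]
      rwa [Nat.add_mul_mod_self_right, Nat.add_mul_mod_self_right,
        Nat.mod_eq_of_lt hc0, Nat.mod_eq_of_lt hc0'] at h1
    have hq : S = S' := by
      rw [hm] at h
      exact Nat.eq_of_mul_eq_mul_right hb (Nat.add_right_cancel h)
    rcases Nat.eq_zero_or_pos j with rfl | hjpos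
    · exact hm
    · obtain ⟨j', rfl⟩ := Nat.exists_eq_add_of_le hjpos
      have := ih (fun i => c (i+1)) (fun i => c' (i+1))
        (fun i hi => hc (i+1) (by omega)) (fun i hi => hc' (i+1) (by omega)) hq j' (by omega)
      simpa [Nat.add_comm] using this

lemma sum_pow_reflect (b k : ℕ) (c : ℕ → ℕ) :
    ∑ i ∈ range k, c i * b ^ (k - 1 - i) = ∑ i ∈ range k, c (k - 1 - i) * b ^ i := by
  rw [← Finset.sum_range_reflect (fun i => c (k-1-i) * b ^ i) k]
  apply Finset.sum_congr rfl
  intro i hi; simp only [mem_range] at hi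
  have h : k - 1 - (k - 1 - i) = i := by omega
  rw [h]

section Defs

variable (q t : ℕ) [Fact q.Prime]

noncomputable def nval (g : Polynomial (ZMod q)) : ℕ :=
  ∑ j ∈ range t, (g.coeff j).val * q ^ (t - 1 - j)

noncomputable def dig (p f : Polynomial (ZMod q)) (i : ℕ) : Polynomial (ZMod q) :=
  (f /ₘ p ^ i) %ₘ p

noncomputable def Mval (p f : Polynomial (ZMod q)) (k : ℕ) : ℕ :=
  ∑ i ∈ range k, nval q t (dig q p f i) * q ^ (t * (k - 1 - i))

variable {q t}

lemma qpos : 0 < q := Nat.Prime.pos Fact.out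

lemma nval_reflect (g : Polynomial (ZMod q)) :
    nval q t g = ∑ j ∈ range t, ((g.coeff (t-1-j)).val) * q ^ j := by
  rw [nval, sum_pow_reflect]

lemma nval_lt (g : Polynomial (ZMod q)) : nval q t g < q ^ t := by
  rw [nval_reflect]
  exact digit_sum_lt q t qpos _ (fun j _ => ZMod.val_lt _)

lemma nval_zero : nval q t (0 : Polynomial (ZMod q)) = 0 := by
  simp [nval]

lemma pev_eq {g : Polynomial (ZMod q)} (hg : g.natDegree < t) :
    pev q g = (nval q t g : ℝ) / (q : ℝ) ^ (t-1) := by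
  have hq : (0:ℝ) < q := by exact_mod_cast qpos (q := q)
  have h1 : pev q g = ∑ j ∈ range t, ((g.coeff j).val : ℝ) / (q:ℝ) ^ j := by
    rw [pev]
    apply Finset.sum_subset
    · intro x hx; simp only [mem_range] at *; omega
    · intro x _ hnx
      simp only [mem_range, not_lt] at hnx
      rw [Polynomial.coeff_eq_zero_of_natDegree_lt (by omega)]
      simp
  rw [h1, nval]
  push_cast
  rw [Finset.sum_div]
  apply Finset.sum_congr rfl
  intro j hj
  simp only [mem_range] at hj
  have hsplit : (q:ℝ)^(t-1) = q^(t-1-j) * q^j := by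
    rw [← pow_add]; congr 1; omega
  rw [hsplit, mul_comm ((q:ℝ)^(t-1-j)) ((q:ℝ)^j),
    mul_div_mul_right _ _ (by positivity : ((q:ℝ)^(t-1-j)) ≠ 0)]

lemma natDeg_lt_of_degree_lt {g : Polynomial (ZMod q)} {n : ℕ} (hn : 0 < n)
    (h : g.degree < (n : WithBot ℕ)) : g.natDegree < n := by
  rcases eq_or_ne g 0 with rfl | hg
  · simpa using hn
  · exact (Polynomial.natDegree_lt_iff_degree_lt hg).2 h

lemma dig_natDegree_lt {p : Polynomial (ZMod q)} (hp : p.Monic) (hpd : p.natDegree = t)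
    (ht : 0 < t) (f : Polynomial (ZMod q)) (i : ℕ) : (dig q p f i).natDegree < t := by
  have h := Polynomial.degree_modByMonic_lt (f /ₘ p ^ i) hp
  rw [Polynomial.degree_eq_natDegree hp.ne_zero, hpd] at h
  exact natDeg_lt_of_degree_lt ht h

lemma Mval_lt (p f : Polynomial (ZMod q)) (k : ℕ) : Mval q t p f k < q ^ (t * k) := by
  have h : Mval q t p f k = ∑ i ∈ range k, nval q t (dig q p f i) * (q ^ t) ^ (k - 1 - i) := by
    rw [Mval]; apply Finset.sum_congr rfl; intro i _; rw [pow_mul]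
  rw [h, sum_pow_reflect, pow_mul]
  exact digit_sum_lt _ k (Nat.pow_pos (n := t) qpos) _ (fun j _ => nval_lt _)

end Defs

section RP

variable {q t : ℕ} [Fact q.Prime]

variable {p : Polynomial (ZMod q)} (hp : p.Monic) (hpd : p.natDegree = t) (ht : 0 < t)

include hp hpd ht

lemma dig_zero_of_le (f : Polynomial (ZMod q)) {i : ℕ} (hi : f.natDegree + 1 ≤ i) :
    dig q p f i = 0 := by
  have hdeg : f.degree < (p ^ i).degree := by
    rw [Polynomial.degree_eq_natDegree (hp.pow i).ne_zero, Polynomial.natDegree_pow, hpd]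
    calc f.degree ≤ (f.natDegree : WithBot ℕ) := Polynomial.degree_le_natDegree
      _ < ((i * t : ℕ) : WithBot ℕ) := by
          rw [Nat.cast_lt]
          have : i ≤ i * t := Nat.le_mul_of_pos_right i ht
          omega
  rw [dig, (Polynomial.divByMonic_eq_zero_iff (hp.pow i)).2 hdeg, Polynomial.zero_modByMonic]

lemma rp_eq (f : Polynomial (ZMod q)) {m : ℕ} (hm : f.natDegree + 1 ≤ m) :
    rp q t p f = ∑ i ∈ range m, (nval q t (dig q p f i) : ℝ) / (q : ℝ) ^ (t * (i + 1)) := by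
  have hq : (0:ℝ) < q := by exact_mod_cast qpos (q := q)
  have step : rp q t p f
      = ∑ i ∈ range (f.natDegree + 1), (nval q t (dig q p f i) : ℝ) / (q:ℝ) ^ (t * (i+1)) := by
    rw [rp, Finset.sum_div]
    apply Finset.sum_congr rfl
    intro i _
    have hnd : (dig q p f i).natDegree < t := dig_natDegree_lt hp hpd ht f i
    rw [show ((f /ₘ p ^ i) %ₘ p) = dig q p f i from rfl, pev_eq hnd]
    rw [div_div, div_div, ← pow_succ, ← pow_add]
    congr 2
    have e1 : t * (i+1) = t*i + t := Nat.mul_succ t i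
    have e2 : t*i = i*t := Nat.mul_comm t i
    omega
  rw [step]
  apply Finset.sum_subset
  · intro x hx; simp only [mem_range] at *; omega
  · intro x _ hx
    simp only [mem_range, not_lt] at hx
    rw [dig_zero_of_le hp hpd ht f hx, nval_zero]
    simp

lemma rp_mem (f : Polynomial (ZMod q)) (k : ℕ) :
    rp q t p f ∈ Set.Ico ((Mval q t p f k : ℝ) / (q:ℝ) ^ (t * k))
      (((Mval q t p f k : ℝ) + 1) / (q:ℝ) ^ (t * k)) := by
  have hq : (0:ℝ) < q := by exact_mod_cast qpos (q := q)
  set m := max k (f.natDegree + 1) with hm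
  rw [rp_eq hp hpd ht f (le_max_right _ _)]
  rw [← Finset.sum_range_add_sum_Ico _ (le_max_left k _)]
  have hhead : ∑ i ∈ range k, (nval q t (dig q p f i) : ℝ) / (q:ℝ) ^ (t * (i+1))
      = (Mval q t p f k : ℝ) / (q:ℝ) ^ (t * k) := by
    rw [Mval]
    push_cast
    rw [Finset.sum_div]
    apply Finset.sum_congr rfl
    intro i hi
    simp only [mem_range] at hi
    rw [div_eq_div_iff (by positivity) (by positivity), mul_assoc, ← pow_add, ← Nat.mul_add]
    congr 3
    omega
  rw [hhead]
  have htail0 : 0 ≤ ∑ i ∈ Ico k m, (nval q t (dig q p f i) : ℝ) / (q:ℝ) ^ (t * (i+1)) :=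
    Finset.sum_nonneg (fun i _ => by positivity)
  have hgeom : ∀ n, k ≤ n → ∑ i ∈ Ico k n, ((q:ℝ)^t - 1) / (q:ℝ) ^ (t * (i+1))
      = 1 / (q:ℝ)^(t*k) - 1 / (q:ℝ)^(t*n) := by
    intro n hn
    induction n, hn using Nat.le_induction with
    | base => simp
    | succ n hn ih =>
      rw [Finset.sum_Ico_succ_top hn, ih]
      have h1 : (q:ℝ) ^ (t * (n+1)) = (q:ℝ)^(t*n) * (q:ℝ)^t := by
        rw [Nat.mul_succ, pow_add]
      rw [h1]
      have h2 : ((q:ℝ)^(t*n)) ≠ 0 := by positivity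
      have h3 : ((q:ℝ)^t) ≠ 0 := by positivity
      field_simp
      ring
  have htail1 : ∑ i ∈ Ico k m, (nval q t (dig q p f i) : ℝ) / (q:ℝ) ^ (t * (i+1))
      < 1 / (q:ℝ)^(t*k) := by
    calc ∑ i ∈ Ico k m, (nval q t (dig q p f i) : ℝ) / (q:ℝ) ^ (t * (i+1))
        ≤ ∑ i ∈ Ico k m, ((q:ℝ)^t - 1) / (q:ℝ) ^ (t * (i+1)) := by
          apply Finset.sum_le_sum
          intro i _
          gcongr
          have := nval_lt (q := q) (t := t) (dig q p f i)
          have : (nval q t (dig q p f i) : ℝ) + 1 ≤ (q:ℝ)^t := by exact_mod_cast this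
          linarith
      _ = 1 / (q:ℝ)^(t*k) - 1 / (q:ℝ)^(t*m) := hgeom m (le_max_left _ _)
      _ < 1 / (q:ℝ)^(t*k) := by
          have : 0 < 1 / (q:ℝ)^(t*m) := by positivity
          linarith
  constructor
  · exact le_add_of_nonneg_right htail0
  · calc (Mval q t p f k : ℝ) / (q:ℝ)^(t*k) + _ 
        < (Mval q t p f k : ℝ) / (q:ℝ)^(t*k) + 1 / (q:ℝ)^(t*k) := by linarith
      _ = ((Mval q t p f k : ℝ) + 1) / (q:ℝ)^(t*k) := by rw [add_div]

lemma rp_mem_iff (f : Polynomial (ZMod q)) (k : ℕ) (a : ℕ) :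
    rp q t p f ∈ Set.Ico ((a : ℝ) / (q:ℝ) ^ (t * k)) (((a : ℝ) + 1) / (q:ℝ) ^ (t * k))
      ↔ Mval q t p f k = a := by
  have hq : (0:ℝ) < q := by exact_mod_cast qpos (q := q)
  have hQ : (0:ℝ) < (q:ℝ)^(t*k) := by positivity
  have h := rp_mem hp hpd ht f k
  constructor
  · intro hmem
    by_contra hne
    rcases Nat.lt_or_ge (Mval q t p f k) a with hlt | hge
    · have : ((Mval q t p f k : ℝ) + 1) / (q:ℝ)^(t*k) ≤ (a:ℝ) / (q:ℝ)^(t*k) := by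
        gcongr
        have : (Mval q t p f k : ℝ) + 1 ≤ a := by exact_mod_cast hlt
        linarith
      have := lt_of_lt_of_le h.2 this
      exact absurd hmem.1 (by linarith)
    · have halt : a < Mval q t p f k := by omega
      have : ((a:ℝ) + 1) / (q:ℝ)^(t*k) ≤ (Mval q t p f k : ℝ) / (q:ℝ)^(t*k) := by
        gcongr
        have : (a:ℝ) + 1 ≤ Mval q t p f k := by exact_mod_cast halt
        linarith
      have := lt_of_lt_of_le hmem.2 this
      exact absurd h.1 (by linarith)
  · rintro rfl
    exact h

end RP

section Structural

variable {q t : ℕ} [Fact q.Prime]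

lemma divByMonic_mul {a b : Polynomial (ZMod q)} (ha : a.Monic) (hb : b.Monic)
    (f : Polynomial (ZMod q)) : f /ₘ (a * b) = (f /ₘ a) /ₘ b := by
  have hab : (a * b).Monic := ha.mul hb
  refine ((Polynomial.div_modByMonic_unique (f := f) (g := a * b) ((f /ₘ a) /ₘ b)
    (a * ((f /ₘ a) %ₘ b) + f %ₘ a) hab ⟨?_, ?_⟩).1)
  · have A := Polynomial.modByMonic_add_div f a
    have B := Polynomial.modByMonic_add_div (f /ₘ a) b
    linear_combination A + a * B
  · have hdab : a.degree + b.degree = ((a.natDegree + b.natDegree : ℕ) : WithBot ℕ) := by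
      rw [Polynomial.degree_eq_natDegree ha.ne_zero, Polynomial.degree_eq_natDegree hb.ne_zero]
      exact (Nat.cast_add _ _).symm
    have hd1 : ((f /ₘ a) %ₘ b).degree < b.degree := Polynomial.degree_modByMonic_lt _ hb
    have hd2 : (a * ((f /ₘ a) %ₘ b)).degree < (a * b).degree := by
      rw [Polynomial.degree_mul, Polynomial.degree_mul]
      exact WithBot.add_lt_add_left
        (by rw [Polynomial.degree_eq_natDegree ha.ne_zero]; exact WithBot.coe_ne_bot) hd1
    have hd3 : (f %ₘ a).degree < (a * b).degree := by
      refine lt_of_lt_of_le (Polynomial.degree_modByMonic_lt f ha) ?_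
      rw [Polynomial.degree_mul]
      calc a.degree = a.degree + 0 := (add_zero _).symm
        _ ≤ a.degree + b.degree := by
            apply add_le_add_right
            rw [Polynomial.degree_eq_natDegree hb.ne_zero]
            exact_mod_cast Nat.zero_le _
    exact lt_of_le_of_lt (Polynomial.degree_add_le _ _) (max_lt hd2 hd3)

variable {p : Polynomial (ZMod q)} (hp : p.Monic)

include hp

lemma dig_succ (g : Polynomial (ZMod q)) (i : ℕ) :
    dig q p g (i + 1) = dig q p (g /ₘ p) i := by
  rw [dig, dig, pow_succ', divByMonic_mul hp (hp.pow i)]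

lemma dig_zero_idx (g : Polynomial (ZMod q)) : dig q p g 0 = g %ₘ p := by
  rw [dig, pow_zero, Polynomial.divByMonic_one]

lemma div_pow_eq (f : Polynomial (ZMod q)) {i k : ℕ} (hik : i ≤ k) :
    f /ₘ p ^ i = p ^ (k - i) * (f /ₘ p ^ k) + (f %ₘ p ^ k) /ₘ p ^ i := by
  refine (Polynomial.div_modByMonic_unique _ ((f %ₘ p ^ k) %ₘ p ^ i) (hp.pow i) ⟨?_, ?_⟩).1
  · have A := Polynomial.modByMonic_add_div f (p ^ k)
    have B := Polynomial.modByMonic_add_div (f %ₘ p ^ k) (p ^ i)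
    have hpk : p ^ i * p ^ (k - i) = p ^ k := by
      rw [← pow_add]; congr 1; omega
    linear_combination A + B + (f /ₘ p ^ k) * hpk
  · exact Polynomial.degree_modByMonic_lt _ (hp.pow i)

lemma dig_mod (f : Polynomial (ZMod q)) {i k : ℕ} (hik : i < k) :
    dig q p f i = dig q p (f %ₘ p ^ k) i := by
  rw [dig, dig, div_pow_eq hp f (le_of_lt hik), Polynomial.add_modByMonic]
  have h0 : (p ^ (k - i) * (f /ₘ p ^ k)) %ₘ p = 0 :=
    (Polynomial.modByMonic_eq_zero_iff_dvd hp).2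
      (dvd_mul_of_dvd_left (dvd_pow_self p (by omega : k - i ≠ 0)) _)
  rw [h0, zero_add]

lemma Mval_mod (f : Polynomial (ZMod q)) (k : ℕ) :
    Mval q t p f k = Mval q t p (f %ₘ p ^ k) k := by
  rw [Mval, Mval]
  apply Finset.sum_congr rfl
  intro i hi
  simp only [mem_range] at hi
  rw [dig_mod hp f hi]

variable (hpd : p.natDegree = t) (ht : 0 < t)

include hpd ht

lemma sum_dig : ∀ (k : ℕ) (g : Polynomial (ZMod q)), g.degree < ((t * k : ℕ) : WithBot ℕ) →
    g = ∑ i ∈ range k, dig q p g i * p ^ i := by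
  intro k
  induction k with
  | zero =>
    intro g hg
    rcases eq_or_ne g 0 with rfl | hne
    · simp
    · rw [Polynomial.degree_eq_natDegree hne] at hg
      exact absurd hg (by simp)
  | succ k ih =>
    intro g hg
    have hg2 : (g /ₘ p).degree < ((t * k : ℕ) : WithBot ℕ) := by
      rcases eq_or_ne (g /ₘ p) 0 with h0 | h0
      · rw [h0, Polynomial.degree_zero]; exact WithBot.bot_lt_coe _
      · have hgne : g ≠ 0 := by
          intro h; rw [h, Polynomial.zero_divByMonic] at h0; exact h0 rfl
        have hnd : g.natDegree < t * (k + 1) :=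
          natDeg_lt_of_degree_lt (by positivity) hg
        have hdm : (g /ₘ p).natDegree = g.natDegree - p.natDegree :=
          Polynomial.natDegree_divByMonic g hp
        have hge : p.degree ≤ g.degree :=
          le_of_not_gt (fun hlt => h0 ((Polynomial.divByMonic_eq_zero_iff hp).2 hlt))
        have htle : t ≤ g.natDegree := by
          rw [Polynomial.degree_eq_natDegree hgne, Polynomial.degree_eq_natDegree hp.ne_zero,
            hpd, Nat.cast_le] at hge
          exact hge
        rw [Polynomial.degree_eq_natDegree h0, Nat.cast_lt, hdm, hpd]
        have e1 : t * (k + 1) = t * k + t := by ring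
        omega
    have hdec := Polynomial.modByMonic_add_div g p
    rw [Finset.sum_range_succ']
    have hsum : ∑ i ∈ range k, dig q p g (i + 1) * p ^ (i + 1) = p * (g /ₘ p) := by
      conv_rhs => rw [ih (g /ₘ p) hg2]
      rw [Finset.mul_sum]
      apply Finset.sum_congr rfl
      intro i _
      rw [dig_succ hp, pow_succ]
      ring
    rw [hsum, dig_zero_idx hp, pow_zero, mul_one]
    linear_combination -hdec

lemma eq_of_Mval_eq {k : ℕ} {g g' : Polynomial (ZMod q)}
    (hg : g.degree < ((t * k : ℕ) : WithBot ℕ)) (hg' : g'.degree < ((t * k : ℕ) : WithBot ℕ))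
    (h : Mval q t p g k = Mval q t p g' k) : g = g' := by
  have hqt : 0 < q ^ t := Nat.pow_pos (n := t) (qpos (q := q))
  have hrefl : ∀ f : Polynomial (ZMod q),
      Mval q t p f k = ∑ i ∈ range k, nval q t (dig q p f (k - 1 - i)) * (q ^ t) ^ i := by
    intro f
    rw [Mval]
    calc ∑ i ∈ range k, nval q t (dig q p f i) * q ^ (t * (k - 1 - i))
        = ∑ i ∈ range k, nval q t (dig q p f i) * (q ^ t) ^ (k - 1 - i) := by
          apply Finset.sum_congr rfl; intro i _; rw [pow_mul]
      _ = ∑ i ∈ range k, nval q t (dig q p f (k - 1 - i)) * (q ^ t) ^ i :=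
          sum_pow_reflect _ _ _
  have hd : ∀ i < k, nval q t (dig q p g i) = nval q t (dig q p g' i) := by
    rw [hrefl g, hrefl g'] at h
    have hinj := digit_sum_inj (q ^ t) hqt k _ _
      (fun j _ => nval_lt _) (fun j _ => nval_lt _) h
    intro i hik
    have := hinj (k - 1 - i) (by omega)
    simpa [show k - 1 - (k - 1 - i) = i from by omega] using this
  have hdig : ∀ i < k, dig q p g i = dig q p g' i := by
    intro i hik
    apply Polynomial.ext
    intro j
    rcases Nat.lt_or_ge j t with hj | hj
    · have e := hd i hik
      rw [nval_reflect, nval_reflect] at e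
      have := digit_sum_inj q (qpos (q := q)) t _ _
        (fun j _ => ZMod.val_lt _) (fun j _ => ZMod.val_lt _) e (t - 1 - j) (by omega)
      simp only [show t - 1 - (t - 1 - j) = j from by omega] at this
      exact ZMod.val_injective q this
    · rw [Polynomial.coeff_eq_zero_of_natDegree_lt
          (lt_of_lt_of_le (dig_natDegree_lt hp hpd ht g i) hj),
        Polynomial.coeff_eq_zero_of_natDegree_lt
          (lt_of_lt_of_le (dig_natDegree_lt hp hpd ht g' i) hj)]
  rw [sum_dig hp hpd ht k g hg, sum_dig hp hpd ht k g' hg']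
  apply Finset.sum_congr rfl
  intro i hi
  simp only [mem_range] at hi
  rw [hdig i hi]

end Structural

section Counting

variable {q : ℕ} [Fact q.Prime]

instance degreeLT_finite (n : ℕ) : Finite (Polynomial.degreeLT (ZMod q) n) :=
  Finite.of_equiv _ (Polynomial.degreeLTEquiv (ZMod q) n).toEquiv.symm

lemma card_degreeLT (n : ℕ) : Nat.card (Polynomial.degreeLT (ZMod q) n) = q ^ n := by
  rw [Nat.card_congr (Polynomial.degreeLTEquiv (ZMod q) n).toEquiv, Nat.card_fun,
    Nat.card_zmod, Nat.card_eq_fintype_card, Fintype.card_fin]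

lemma degree_pow_monic {t : ℕ} {p : Polynomial (ZMod q)} (hp : p.Monic)
    (hpd : p.natDegree = t) (k : ℕ) : (p ^ k).degree = ((t * k : ℕ) : WithBot ℕ) := by
  rw [Polynomial.degree_eq_natDegree (hp.pow k).ne_zero, Polynomial.natDegree_pow, hpd,
    Nat.mul_comm]

lemma exists_Mval_rep {t : ℕ} {p : Polynomial (ZMod q)} (hp : p.Monic)
    (hpd : p.natDegree = t) (ht : 0 < t) (k a : ℕ) (ha : a < q ^ (t * k)) :
    ∃ g : Polynomial (ZMod q), g.degree < ((t * k : ℕ) : WithBot ℕ) ∧ Mval q t p g k = a := by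
  let Φ : Polynomial.degreeLT (ZMod q) (t * k) → Fin (q ^ (t * k)) :=
    fun g => ⟨Mval q t p g.1 k, Mval_lt _ _ _⟩
  have hinj : Function.Injective Φ := by
    intro g g' h
    have hM : Mval q t p g.1 k = Mval q t p g'.1 k := by
      have := congrArg Fin.val h
      simpa [Φ] using this
    exact Subtype.ext (eq_of_Mval_eq hp hpd ht (Polynomial.mem_degreeLT.1 g.2)
      (Polynomial.mem_degreeLT.1 g'.2) hM)
  have hbij : Function.Bijective Φ := by
    rw [Nat.bijective_iff_injective_and_card]
    exact ⟨hinj, by rw [card_degreeLT, Nat.card_eq_fintype_card, Fintype.card_fin]⟩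
  obtain ⟨g, hg⟩ := hbij.2 ⟨a, ha⟩
  exact ⟨g.1, Polynomial.mem_degreeLT.1 g.2, by simpa [Φ] using congrArg Fin.val hg⟩

lemma mod_sub_dvd {P f u : Polynomial (ZMod q)} (hP : P.Monic) (h : f %ₘ P = u %ₘ P) :
    P ∣ f - u := by
  have A := Polynomial.modByMonic_add_div f P
  have B := Polynomial.modByMonic_add_div u P
  exact ⟨f /ₘ P - u /ₘ P, by linear_combination -A + B + h⟩

lemma mod_eq_of_sub_dvd {P f u : Polynomial (ZMod q)} (hP : P.Monic) (h : P ∣ f - u) :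
    f %ₘ P = u %ₘ P := by
  have hd : (f %ₘ P - u %ₘ P).degree < P.degree :=
    lt_of_le_of_lt (Polynomial.degree_sub_le _ _)
      (max_lt (Polynomial.degree_modByMonic_lt _ hP) (Polynomial.degree_modByMonic_lt _ hP))
  have hdvd : P ∣ f %ₘ P - u %ₘ P := by
    have A := Polynomial.modByMonic_add_div f P
    have B := Polynomial.modByMonic_add_div u P
    obtain ⟨c, hc⟩ := h
    exact ⟨c - f /ₘ P + u /ₘ P, by linear_combination A - B + hc⟩
  have := Polynomial.eq_zero_of_dvd_of_degree_lt hdvd hd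
  linear_combination this

end Counting

/-- for any `N` and any canonical box `B` of volume `q^(-s)` with
`s = t(k₁+⋯+k_d) ≤ N`, exactly `q^(N−s)` polynomials `f` of degree `< N` satisfy
`r(f) ∈ B`. -/
theorem stmt16 (q d t : ℕ) [Fact q.Prime] (hd : 2 ≤ d)
    (ht : t = ⌈2 * Real.log d / Real.log q + 2⌉₊)
    (p : Fin d → Polynomial (ZMod q))
    (hmonic : ∀ i, (p i).Monic) (hirr : ∀ i, Irreducible (p i))
    (hdeg : ∀ i, (p i).natDegree = t) (hinj : Function.Injective p)
    (N : ℕ) (hN : 0 < N)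
    (k a : Fin d → ℕ) (ha : ∀ i, a i + 1 ≤ q ^ (t * k i))
    (hs : t * ∑ i, k i ≤ N) :
    {f : Polynomial (ZMod q) | f.degree < ((N : ℕ) : WithBot ℕ) ∧
        rmap q t d p f ∈ canonicalBox q t d k a}.ncard
      = q ^ (N - t * ∑ i, k i) := by
  classical
  have ht1 : 0 < t := by
    have i0 : Fin d := ⟨0, by omega⟩
    have h1 := (hirr i0).natDegree_pos
    rwa [hdeg i0] at h1
  set s := t * ∑ i, k i with hs_def
  have hrep : ∀ i : Fin d, ∃ g : Polynomial (ZMod q),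
      g.degree < ((t * k i : ℕ) : WithBot ℕ) ∧ Mval q t (p i) g (k i) = a i :=
    fun i => exists_Mval_rep (hmonic i) (hdeg i) ht1 (k i) (a i) (by have := ha i; omega)
  choose g hgdeg hgM using hrep
  have hmoddeg : ∀ (i : Fin d) (f : Polynomial (ZMod q)),
      (f %ₘ (p i) ^ (k i)).degree < ((t * k i : ℕ) : WithBot ℕ) := by
    intro i f
    have h1 := Polynomial.degree_modByMonic_lt f ((hmonic i).pow (k i))
    rwa [degree_pow_monic (hmonic i) (hdeg i) (k i)] at h1
  have hchar : ∀ f : Polynomial (ZMod q),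
      rmap q t d p f ∈ canonicalBox q t d k a ↔ ∀ i, f %ₘ (p i) ^ (k i) = g i := by
    intro f
    rw [canonicalBox, Set.mem_univ_pi]
    apply forall_congr'
    intro i
    rw [show rmap q t d p f i = rp q t (p i) f from rfl]
    rw [rp_mem_iff (hmonic i) (hdeg i) ht1 f (k i) (a i)]
    constructor
    · intro hM
      refine eq_of_Mval_eq (hmonic i) (hdeg i) ht1 (hmoddeg i f) (hgdeg i) ?_
      rw [← Mval_mod (hmonic i) f (k i), hM, hgM i]
    · intro hfg
      rw [Mval_mod (hmonic i) f (k i), hfg, hgM i]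
  set Pt : Polynomial (ZMod q) := ∏ i, (p i) ^ (k i) with hPt_def
  have hPt_monic : Pt.Monic := Polynomial.monic_prod_of_monic _ _ (fun i _ => (hmonic i).pow _)
  have hPt_natdeg : Pt.natDegree = s := by
    rw [hPt_def, Polynomial.natDegree_prod _ _ (fun i _ => ((hmonic i).pow _).ne_zero)]
    rw [hs_def, Finset.mul_sum]
    apply Finset.sum_congr rfl
    intro i _
    rw [Polynomial.natDegree_pow, hdeg i, Nat.mul_comm]
  have hPt_deg : Pt.degree = (s : WithBot ℕ) := by
    rw [Polynomial.degree_eq_natDegree hPt_monic.ne_zero, hPt_natdeg]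
  have hcop : (↑(Finset.univ : Finset (Fin d)) : Set (Fin d)).Pairwise
      (Function.onFun IsCoprime fun i => (p i) ^ (k i)) := by
    intro i _ j _ hij
    have hpij : ¬ (p i ∣ p j) := by
      intro hdvd
      exact hij (hinj (Polynomial.eq_of_monic_of_associated (hmonic i) (hmonic j)
        ((hirr i).associated_of_dvd (hirr j) hdvd)))
    exact (((hirr i).coprime_iff_not_dvd).2 hpij).pow
  have hdvd_prod : ∀ f u : Polynomial (ZMod q),
      (∀ i, f %ₘ (p i) ^ (k i) = u %ₘ (p i) ^ (k i)) → Pt ∣ f - u := by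
    intro f u h
    exact Finset.prod_dvd_of_coprime hcop (fun i _ => mod_sub_dvd ((hmonic i).pow _) (h i))
  let ρ : Polynomial.degreeLT (ZMod q) s → (∀ i : Fin d, Polynomial.degreeLT (ZMod q) (t * k i)) :=
    fun f i => ⟨f.1 %ₘ (p i) ^ (k i), Polynomial.mem_degreeLT.2 (hmoddeg i f.1)⟩
  have hρinj : Function.Injective ρ := by
    intro f f' h
    have hmods : ∀ i, f.1 %ₘ (p i) ^ (k i) = f'.1 %ₘ (p i) ^ (k i) := by
      intro i
      have h2 := congrFun h i
      simpa [ρ, Subtype.ext_iff] using h2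
    have hdv : Pt ∣ f.1 - f'.1 := hdvd_prod _ _ hmods
    have hdeg2 : (f.1 - f'.1).degree < Pt.degree := by
      rw [hPt_deg]
      exact lt_of_le_of_lt (Polynomial.degree_sub_le _ _)
        (max_lt (Polynomial.mem_degreeLT.1 f.2) (Polynomial.mem_degreeLT.1 f'.2))
    exact Subtype.ext (sub_eq_zero.1 (Polynomial.eq_zero_of_dvd_of_degree_lt hdv hdeg2))
  have hρbij : Function.Bijective ρ := by
    rw [Nat.bijective_iff_injective_and_card]
    refine ⟨hρinj, ?_⟩
    rw [card_degreeLT, Nat.card_pi]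
    have h3 : ∀ i : Fin d, Nat.card (Polynomial.degreeLT (ZMod q) (t * k i)) = q ^ (t * k i) :=
      fun i => card_degreeLT _
    rw [Finset.prod_congr rfl (fun i _ => h3 i), Finset.prod_pow_eq_pow_sum, hs_def,
      ← Finset.mul_sum]
  obtain ⟨u0, hu0⟩ := hρbij.2 (fun i => ⟨g i, Polynomial.mem_degreeLT.2 (hgdeg i)⟩)
  have hu0deg : u0.1.degree < (s : WithBot ℕ) := Polynomial.mem_degreeLT.1 u0.2
  have hu0mod : ∀ i, u0.1 %ₘ (p i) ^ (k i) = g i := by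
    intro i
    have h2 := congrFun hu0 i
    simpa [ρ, Subtype.ext_iff] using h2
  have hsN : (s : WithBot ℕ) ≤ (N : WithBot ℕ) := by exact_mod_cast hs
  have hmem : ∀ h : Polynomial (ZMod q), h.degree < ((N - s : ℕ) : WithBot ℕ) →
      (Pt * h + u0.1).degree < ((N : ℕ) : WithBot ℕ) ∧
        rmap q t d p (Pt * h + u0.1) ∈ canonicalBox q t d k a := by
    intro h hh
    constructor
    · have h1 : (Pt * h).degree < ((N : ℕ) : WithBot ℕ) := by
        rcases eq_or_ne h 0 with rfl | hne
        · rw [mul_zero, Polynomial.degree_zero]; exact WithBot.bot_lt_coe N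
        · rw [Polynomial.degree_mul, hPt_deg, Polynomial.degree_eq_natDegree hne]
          rw [Polynomial.degree_eq_natDegree hne, Nat.cast_lt] at hh
          rw [← Nat.cast_add, Nat.cast_lt]
          omega
      exact lt_of_le_of_lt (Polynomial.degree_add_le _ _)
        (max_lt h1 (lt_of_lt_of_le hu0deg hsN))
    · rw [hchar]
      intro i
      have hdvd : (p i) ^ (k i) ∣ Pt * h :=
        (Finset.dvd_prod_of_mem _ (Finset.mem_univ i)).mul_right h
      rw [Polynomial.add_modByMonic,
        (Polynomial.modByMonic_eq_zero_iff_dvd ((hmonic i).pow _)).2 hdvd, zero_add, hu0mod i]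
  set S : Set (Polynomial (ZMod q)) := {f : Polynomial (ZMod q) |
      f.degree < ((N : ℕ) : WithBot ℕ) ∧ rmap q t d p f ∈ canonicalBox q t d k a} with hS_def
  let φ : Polynomial.degreeLT (ZMod q) (N - s) → S :=
    fun h => ⟨Pt * h.1 + u0.1, hmem h.1 (Polynomial.mem_degreeLT.1 h.2)⟩
  have hφinj : Function.Injective φ := by
    intro h h' e
    have e1 : Pt * h.1 + u0.1 = Pt * h'.1 + u0.1 := congrArg Subtype.val e
    exact Subtype.ext (mul_left_cancel₀ hPt_monic.ne_zero (add_right_cancel e1))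
  have hφsurj : Function.Surjective φ := by
    rintro ⟨f, hf⟩
    have hf2 : ∀ i, f %ₘ (p i) ^ (k i) = g i := (hchar f).1 hf.2
    have hdvd : Pt ∣ f - u0.1 := hdvd_prod f u0.1 (fun i => by rw [hf2 i, hu0mod i])
    have hfu : Pt * ((f - u0.1) /ₘ Pt) = f - u0.1 := by
      have A := Polynomial.modByMonic_add_div (f - u0.1) Pt
      rwa [(Polynomial.modByMonic_eq_zero_iff_dvd hPt_monic).2 hdvd, zero_add] at A
    have hdeg0 : ((f - u0.1) /ₘ Pt).degree < ((N - s : ℕ) : WithBot ℕ) := by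
      rcases eq_or_ne ((f - u0.1) /ₘ Pt) 0 with h00 | h00
      · rw [h00, Polynomial.degree_zero]; exact WithBot.bot_lt_coe _
      · have hfu_deg : (f - u0.1).degree < ((N : ℕ) : WithBot ℕ) :=
          lt_of_le_of_lt (Polynomial.degree_sub_le _ _)
            (max_lt hf.1 (lt_of_lt_of_le hu0deg hsN))
        rw [← hfu, Polynomial.degree_mul, hPt_deg, Polynomial.degree_eq_natDegree h00,
          ← Nat.cast_add, Nat.cast_lt] at hfu_deg
        rw [Polynomial.degree_eq_natDegree h00, Nat.cast_lt]
        omega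
    refine ⟨⟨(f - u0.1) /ₘ Pt, Polynomial.mem_degreeLT.2 hdeg0⟩, ?_⟩
    apply Subtype.ext
    show Pt * ((f - u0.1) /ₘ Pt) + u0.1 = f
    rw [hfu]; ring
  have hcard : Nat.card S = q ^ (N - s) := by
    rw [Nat.card_congr (Equiv.ofBijective φ ⟨hφinj, hφsurj⟩).symm, card_degreeLT]
  rw [← Nat.card_coe_set_eq]
  exact hcard
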